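/- arXiv:1301.6366 — 5 statements merged into one kernel-verified Lean document; each statement's English description precedes it below -/
import Mathlib

section
/- Let G be a finitely generated group such that every group homomorphism from G to the additive group ℝ is trivial, and suppose G acts on [0,1) by PL homeomorphisms fixing 0 (i.e., via a homomorphism from G to the group of PL homeomorphisms of [0,1), each of which fixes 0). Then there exists a real number a with 0 < a < 1 such that every element of G acts as the identity on [0, a]. -/
open Set

/-- `f` is piecewise linear on `[0,1)`: there are points `0 = t₀ < t₁ < ⋯ < tₙ < 1`
and reals `aᵢ, bᵢ` such that `f x = aᵢ * x + bᵢ` on each `[tᵢ, tᵢ₊₁]`, and on `[tₙ, 1)`. -/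
def IsPLOnIco (f : ℝ → ℝ) : Prop :=
  ∃ (n : ℕ) (t a b : ℕ → ℝ),
    t 0 = 0 ∧ (∀ i < n, t i < t (i + 1)) ∧ t n < 1 ∧
    (∀ i < n, ∀ x ∈ Icc (t i) (t (i + 1)), f x = a i * x + b i) ∧
    (∀ x ∈ Ico (t n) 1, f x = a n * x + b n)

/-- A PL homeomorphism of `[0,1)`: a homeomorphism of `[0,1)` (a bijection of `[0,1)`
onto itself, continuous with continuous inverse) which is piecewise linear. -/
def IsPLHomeoIco (f : ℝ → ℝ) : Prop :=
  BijOn f (Ico (0:ℝ) 1) (Ico (0:ℝ) 1) ∧ ContinuousOn f (Ico (0:ℝ) 1) ∧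
  (∃ g : ℝ → ℝ, InvOn g f (Ico (0:ℝ) 1) (Ico (0:ℝ) 1) ∧ ContinuousOn g (Ico (0:ℝ) 1)) ∧
  IsPLOnIco f

/-- A PL map fixing `0` is linear near `0`. -/
lemma IsPLOnIco.linear_germ {f : ℝ → ℝ} (hPL : IsPLOnIco f) (h0 : f 0 = 0) :
    ∃ c δ : ℝ, 0 < δ ∧ δ < 1 ∧ ∀ x ∈ Icc (0:ℝ) δ, f x = c * x := by
  obtain ⟨n, t, a, b, ht0, hlt, htn, hpc, hlast⟩ := hPL
  rcases Nat.eq_zero_or_pos n with hn | hn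
  · subst hn
    have h00 : f 0 = a 0 * 0 + b 0 := hlast 0 ⟨le_of_eq ht0, one_pos⟩
    have hb : b 0 = 0 := by rw [h0] at h00; linarith [h00]
    refine ⟨a 0, 1/2, by norm_num, by norm_num, fun x hx => ?_⟩
    have := hlast x ⟨ht0 ▸ hx.1, by linarith [hx.2]⟩
    rw [this, hb, add_zero]
  · have h01 : t 0 < t 1 := hlt 0 hn
    rw [ht0] at h01
    have h00 : f 0 = a 0 * 0 + b 0 := hpc 0 hn 0 ⟨le_of_eq ht0, ht0 ▸ h01.le⟩
    have hb : b 0 = 0 := by rw [h0] at h00; linarith [h00]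
    refine ⟨a 0, min (t 1) (1/2), lt_min h01 (by norm_num),
      lt_of_le_of_lt (min_le_right _ _) (by norm_num), fun x hx => ?_⟩
    have := hpc 0 hn x ⟨ht0 ▸ hx.1, le_trans hx.2 (min_le_left _ _)⟩
    rw [this, hb, add_zero]

/-- PL Reeb–Thurston stability, local form: if a finitely generated group `G` with
no nontrivial homomorphism to `ℝ` acts on `[0,1)` by PL homeomorphisms fixing `0`
(via a homomorphism to the group of PL homeomorphisms of `[0,1)`), then the action
is trivial on some interval `[0, a]` with `0 < a < 1`. -/
theorem pl_action_on_Ico_trivial_near_zero (G : Type*) [Group G] [Group.FG G]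
    (hH1 : ∀ φ : G →* Multiplicative ℝ, ∀ g : G, φ g = 1)
    (ρ : G → ℝ → ℝ)
    (hPL : ∀ g : G, IsPLHomeoIco (ρ g))
    (hfix : ∀ g : G, ρ g 0 = 0)
    (hone : ∀ x ∈ Ico (0:ℝ) 1, ρ 1 x = x)
    (hmul : ∀ g h : G, ∀ x ∈ Ico (0:ℝ) 1, ρ (g * h) x = ρ g (ρ h x)) :
    ∃ a : ℝ, 0 < a ∧ a < 1 ∧ ∀ g : G, ∀ x ∈ Icc (0:ℝ) a, ρ g x = x := by
  classical
  have germ : ∀ g : G, ∃ c δ : ℝ, 0 < δ ∧ δ < 1 ∧ ∀ x ∈ Icc (0:ℝ) δ, ρ g x = c * x :=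
    fun g => (hPL g).2.2.2.linear_germ (hfix g)
  choose c δ hδpos hδlt hlin using germ
  -- slopes are positive
  have hcpos : ∀ g, 0 < c g := by
    intro g
    have hδIco : δ g ∈ Ico (0:ℝ) 1 := ⟨(hδpos g).le, hδlt g⟩
    have h1 : ρ g (δ g) = c g * δ g := hlin g (δ g) ⟨(hδpos g).le, le_refl _⟩
    have hmem : ρ g (δ g) ∈ Ico (0:ℝ) 1 := (hPL g).1.mapsTo hδIco
    have hne : ρ g (δ g) ≠ 0 := by
      intro h
      have h0' : (0:ℝ) ∈ Ico (0:ℝ) 1 := ⟨le_refl _, one_pos⟩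
      have := (hPL g).1.injOn hδIco h0' (by rw [h, hfix g])
      exact absurd this (ne_of_gt (hδpos g))
    have hpos : 0 < c g * δ g := lt_of_le_of_ne (h1 ▸ hmem.1) (fun h => hne (by rw [h1, ← h]))
    nlinarith [hδpos g]
  -- slopes multiply
  have hcm : ∀ g h : G, c (g * h) = c g * c h := by
    intro g h
    set x := min (δ (g * h)) (min (δ h) (δ g / c h)) with hx
    have hx0 : 0 < x := lt_min (hδpos _) (lt_min (hδpos _) (div_pos (hδpos g) (hcpos h)))
    have hx1 : x < 1 := lt_of_le_of_lt (min_le_left _ _) (hδlt _)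
    have e1 : ρ (g * h) x = c (g * h) * x := hlin _ x ⟨hx0.le, min_le_left _ _⟩
    have e2 : ρ h x = c h * x :=
      hlin h x ⟨hx0.le, le_trans (min_le_right _ _) (min_le_left _ _)⟩
    have hxle : x ≤ δ g / c h := le_trans (min_le_right _ _) (min_le_right _ _)
    have hc : c h * x ∈ Icc (0:ℝ) (δ g) := by
      constructor
      · exact le_of_lt (mul_pos (hcpos h) hx0)
      · calc c h * x ≤ c h * (δ g / c h) := by
              exact mul_le_mul_of_nonneg_left hxle (hcpos h).le
          _ = δ g := by rw [mul_comm, div_mul_cancel₀ _ (ne_of_gt (hcpos h))]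
    have e3 : ρ g (c h * x) = c g * (c h * x) := hlin g _ hc
    have key : ρ (g * h) x = ρ g (ρ h x) := hmul g h x ⟨hx0.le, hx1⟩
    rw [e1, e2, e3] at key
    have := mul_right_cancel₀ (ne_of_gt hx0) (by linarith [key] : c (g * h) * x = (c g * c h) * x)
    exact this
  -- the log-slope homomorphism is trivial, so all slopes are 1
  have hc1 : ∀ g, c g = 1 := by
    intro g
    have hmm : ∀ a b : G,
        Multiplicative.ofAdd (Real.log (c (a * b))) =
          Multiplicative.ofAdd (Real.log (c a)) * Multiplicative.ofAdd (Real.log (c b)) := by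
      intro a b
      rw [← ofAdd_add, hcm a b, Real.log_mul (ne_of_gt (hcpos a)) (ne_of_gt (hcpos b))]
    let φ : G →* Multiplicative ℝ :=
      MonoidHom.mk' (fun g => Multiplicative.ofAdd (Real.log (c g))) hmm
    have := hH1 φ g
    have hlog : Real.log (c g) = 0 := by
      have : Multiplicative.toAdd (φ g) = Multiplicative.toAdd (1 : Multiplicative ℝ) := by
        rw [this]
      simpa [φ] using this
    calc c g = Real.exp (Real.log (c g)) := (Real.exp_log (hcpos g)).symm
      _ = 1 := by rw [hlog, Real.exp_zero]
  have hfixg : ∀ g : G, ∀ x ∈ Icc (0:ℝ) (δ g), ρ g x = x := by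
    intro g x hx
    rw [hlin g x hx, hc1 g, one_mul]
  -- finite generation gives a uniform interval
  obtain ⟨S, hS⟩ := Group.FG.out (G := G)
  set S' : Finset G := insert 1 S with hS'
  have hne : S'.Nonempty := ⟨1, Finset.mem_insert_self _ _⟩
  set a : ℝ := S'.inf' hne δ with ha
  have hapos : 0 < a := by
    rw [ha, Finset.lt_inf'_iff]
    intro b _
    exact hδpos b
  have halt : a < 1 := lt_of_le_of_lt (Finset.inf'_le δ (Finset.mem_insert_self 1 S)) (hδlt 1)
  refine ⟨a, hapos, halt, ?_⟩
  have hclos : Subgroup.closure (S' : Set G) = ⊤ := by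
    rw [eq_top_iff, ← hS]
    exact Subgroup.closure_mono (by intro x hx; simp [hS']; tauto)
  intro g
  have hg : g ∈ Subgroup.closure (S' : Set G) := hclos ▸ Subgroup.mem_top g
  induction hg using Subgroup.closure_induction with
  | mem s hs =>
      intro x hx
      exact hfixg s x ⟨hx.1, le_trans hx.2 (Finset.inf'_le δ (by exact_mod_cast hs))⟩
  | one =>
      intro x hx
      exact hone x ⟨hx.1, lt_of_le_of_lt hx.2 halt⟩
  | mul u v hu hv ihu ihv =>
      intro x hx
      have hxI : x ∈ Ico (0:ℝ) 1 := ⟨hx.1, lt_of_le_of_lt hx.2 halt⟩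
      rw [hmul u v x hxI, ihv x hx, ihu x hx]
  | inv u hu ihu =>
      intro x hx
      have hxI : x ∈ Ico (0:ℝ) 1 := ⟨hx.1, lt_of_le_of_lt hx.2 halt⟩
      have h1 : ρ (u⁻¹ * u) x = ρ u⁻¹ (ρ u x) := hmul u⁻¹ u x hxI
      rw [ihu x hx] at h1
      rw [inv_mul_cancel] at h1
      rw [← h1, hone x hxI]
end

section
/- Let G be a finitely generated group such that every group homomorphism from G to the additive group ℝ is trivial. Then any action of G on [0,1) by PL homeomorphisms fixing 0 is trivial; that is, every element of G acts as the identity on all of [0,1). -/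
open Set

private lemma find_piece (n : ℕ) (t : ℕ → ℝ) :
    ∀ m, m ≤ n → ∀ c, t 0 ≤ c → c < t m → ∃ i < m, t i ≤ c ∧ c < t (i + 1) := by
  intro m
  induction m with
  | zero => intro _ c h0 hm; exact absurd (h0.trans_lt hm) (lt_irrefl _)
  | succ k ih =>
    intro hk c h0 hm
    by_cases h : t k ≤ c
    · exact ⟨k, Nat.lt_succ_self k, h, hm⟩
    · obtain ⟨i, hi, h1, h2⟩ := ih (Nat.le_of_succ_le hk) c h0 (lt_of_not_ge h)
      exact ⟨i, hi.trans (Nat.lt_succ_self k), h1, h2⟩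

private lemma pl_local (f : ℝ → ℝ) (hf : IsPLOnIco f) (c : ℝ) (hc : c ∈ Ico (0:ℝ) 1) :
    ∃ a b δ : ℝ, 0 < δ ∧ c + δ ≤ 1 ∧ ∀ x ∈ Ico c (c + δ), f x = a * x + b := by
  obtain ⟨n, t, a, b, ht0, htlt, htn, hpiece, hlast⟩ := hf
  by_cases h : t n ≤ c
  · exact ⟨a n, b n, 1 - c, by linarith [hc.2], by linarith, fun x hx =>
      hlast x ⟨h.trans hx.1, by linarith [hx.2]⟩⟩
  · obtain ⟨i, hi, h1, h2⟩ := find_piece n t n le_rfl c (ht0 ▸ hc.1) (lt_of_not_ge h)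
    refine ⟨a i, b i, min (t (i + 1) - c) (1 - c), by
      constructor
      · exact lt_min (by linarith) (by linarith [hc.2])
      constructor
      · have := min_le_right (t (i + 1) - c) (1 - c); linarith
      · intro x hx
        refine hpiece i hi x ⟨h1.trans hx.1, ?_⟩
        have := hx.2
        have := min_le_left (t (i + 1) - c) (1 - c)
        linarith⟩

private lemma slope_unique {a a' c δ : ℝ} (hδ : 0 < δ)
    (h : ∀ x ∈ Ico c (c + δ), a * (x - c) = a' * (x - c)) : a = a' := by
  have := h (c + δ/2) ⟨by linarith, by linarith⟩
  nlinarith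

private lemma fix_slope (f : ℝ → ℝ) (hf : IsPLHomeoIco f) (c : ℝ) (hc : c ∈ Ico (0:ℝ) 1)
    (hfx : ∀ y ∈ Icc (0:ℝ) c, f y = y) :
    ∃ a : ℝ, 0 < a ∧ ∃ δ : ℝ, 0 < δ ∧ c + δ ≤ 1 ∧
      ∀ x ∈ Ico c (c + δ), f x = c + a * (x - c) := by
  obtain ⟨hbij, hcont, hinv, hpl⟩ := hf
  obtain ⟨a, b, δ, hδ, hδ1, hlin⟩ := pl_local f hpl c hc
  have hfc : f c = c := hfx c ⟨hc.1, le_rfl⟩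
  have hb : b = c - a * c := by
    have := hlin c ⟨le_rfl, by linarith⟩; rw [hfc] at this; linarith
  have hlin' : ∀ x ∈ Ico c (c + δ), f x = c + a * (x - c) := by
    intro x hx; rw [hlin x hx, hb]; ring
  have hinj := hbij.injOn
  have hc1 : (0:ℝ) ≤ c := hc.1
  refine ⟨a, ?_, δ, hδ, hδ1, hlin'⟩
  rcases lt_trichotomy a 0 with hneg | hzero | hpos
  · -- a < 0 : contradiction
    exfalso
    by_cases hc0 : c = 0
    · -- f (δ/2) = a * δ/2 < 0
      have hmem : δ/2 ∈ Ico (0:ℝ) 1 := ⟨by linarith, by rw [hc0] at hδ1; linarith⟩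
      have := hbij.mapsTo hmem
      have hval := hlin' (δ/2) ⟨by rw [hc0]; linarith, by rw [hc0]; linarith⟩
      rw [hc0] at hval
      have : (0:ℝ) ≤ f (δ/2) := this.1
      nlinarith
    · have hcpos : 0 < c := lt_of_le_of_ne hc1 (Ne.symm hc0)
      set ε := min (δ/2) (c / (2 * (-a))) with hε
      have hapos : 0 < -a := by linarith
      have hε1 : 0 < ε := lt_min (by linarith) (div_pos hcpos (by linarith))
      have hε2 : ε ≤ δ/2 := min_le_left _ _
      have hε3 : ε ≤ c / (2 * (-a)) := min_le_right _ _
      have key : -a * ε ≤ c / 2 := by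
        have := (le_div_iff₀ (by linarith : (0:ℝ) < 2*(-a))).mp hε3
        nlinarith
      have h1 : c + a * ε ∈ Icc (0:ℝ) c := ⟨by nlinarith, by nlinarith⟩
      have hv1 : f (c + a * ε) = c + a * ε := hfx _ h1
      have hv2 : f (c + ε) = c + a * ε := by
        have := hlin' (c + ε) ⟨by linarith, by linarith⟩
        rw [this]; ring_nf
      have hm1 : c + a * ε ∈ Ico (0:ℝ) 1 := ⟨h1.1, lt_of_le_of_lt h1.2 hc.2⟩
      have hm2 : c + ε ∈ Ico (0:ℝ) 1 := ⟨by linarith, by linarith⟩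
      have := hinj hm1 hm2 (by rw [hv1, hv2])
      nlinarith
  · -- a = 0 : contradiction with injectivity
    exfalso
    have hm1 : c ∈ Ico (0:ℝ) 1 := hc
    have hm2 : c + δ/2 ∈ Ico (0:ℝ) 1 := ⟨by linarith, by linarith⟩
    have hv1 : f c = c := hfc
    have hv2 : f (c + δ/2) = c := by
      rw [hlin' (c + δ/2) ⟨by linarith, by linarith⟩, hzero]; ring
    have := hinj hm1 hm2 (by rw [hv1, hv2])
    linarith
  · exact hpos

/-- PL Reeb–Thurston stability on the half-open interval: if a finitely generated
group `G` with no nontrivial homomorphism to `ℝ` acts on `[0,1)` by PL homeomorphisms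
fixing `0`, then the action is trivial: every element acts as the identity on `[0,1)`. -/
theorem pl_action_on_Ico_trivial (G : Type*) [Group G] [Group.FG G]
    (hH1 : ∀ φ : G →* Multiplicative ℝ, ∀ g : G, φ g = 1)
    (ρ : G → ℝ → ℝ)
    (hPL : ∀ g : G, IsPLHomeoIco (ρ g))
    (hfix : ∀ g : G, ρ g 0 = 0)
    (hone : ∀ x ∈ Ico (0:ℝ) 1, ρ 1 x = x)
    (hmul : ∀ g h : G, ∀ x ∈ Ico (0:ℝ) 1, ρ (g * h) x = ρ g (ρ h x)) :
    ∀ g : G, ∀ x ∈ Ico (0:ℝ) 1, ρ g x = x := by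
  obtain ⟨S, hSgen, hSfin⟩ := Group.fg_iff.mp ‹Group.FG G›
  -- Key step: at any point c fixed (together with [0,c]) by the whole action,
  -- every element acts as the identity on a right neighborhood of c.
  have key : ∀ c ∈ Ico (0:ℝ) 1, (∀ g : G, ∀ y ∈ Icc (0:ℝ) c, ρ g y = y) →
      ∀ g : G, ∃ δ : ℝ, 0 < δ ∧ c + δ ≤ 1 ∧ ∀ x ∈ Ico c (c + δ), ρ g x = x := by
    intro c hc hallfix
    have hsl : ∀ g : G, ∃ a : ℝ, 0 < a ∧ ∃ δ : ℝ, 0 < δ ∧ c + δ ≤ 1 ∧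
        ∀ x ∈ Ico c (c + δ), ρ g x = c + a * (x - c) :=
      fun g => fix_slope _ (hPL g) c hc (hallfix g)
    choose sl hslpos del hdelpos hdel1 hsleq using hsl
    have hmul_sl : ∀ g h : G, sl (g * h) = sl g * sl h := by
      intro g h
      have hδ'pos : 0 < min (del (g*h)) (min (del h) (del g / sl h)) :=
        lt_min (hdelpos _) (lt_min (hdelpos _) (div_pos (hdelpos _) (hslpos _)))
      apply slope_unique hδ'pos
      intro x hx
      have hb1 : min (del (g*h)) (min (del h) (del g / sl h)) ≤ del (g*h) := min_le_left _ _
      have hb2 : min (del (g*h)) (min (del h) (del g / sl h)) ≤ del h :=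
        le_trans (min_le_right _ _) (min_le_left _ _)
      have hb3 : min (del (g*h)) (min (del h) (del g / sl h)) ≤ del g / sl h :=
        le_trans (min_le_right _ _) (min_le_right _ _)
      have hx1 : x ∈ Ico c (c + del (g*h)) := ⟨hx.1, lt_of_lt_of_le hx.2 (by linarith)⟩
      have hxI : x ∈ Ico (0:ℝ) 1 := ⟨le_trans hc.1 hx.1, lt_of_lt_of_le hx1.2 (hdel1 _)⟩
      have hxh : x ∈ Ico c (c + del h) := ⟨hx.1, lt_of_lt_of_le hx.2 (by linarith)⟩
      have hhx : ρ h x = c + sl h * (x - c) := hsleq h x hxh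
      have hρhx : ρ h x ∈ Ico c (c + del g) := by
        constructor
        · rw [hhx]; nlinarith [hslpos h, hx.1]
        · rw [hhx]
          have h2 : x - c < del g / sl h := by
            have := hx.2; linarith
          have := (lt_div_iff₀ (hslpos h)).mp h2
          nlinarith
      have e1 : ρ (g*h) x = c + sl (g*h) * (x - c) := hsleq _ x hx1
      have e2 : ρ (g*h) x = ρ g (ρ h x) := hmul g h x hxI
      have e3 : ρ g (ρ h x) = c + sl g * (ρ h x - c) := hsleq g _ hρhx
      have e4 := e1.symm.trans (e2.trans e3)
      rw [hhx] at e4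
      nlinarith [e4]
    have hone_sl : sl 1 = 1 := by
      apply slope_unique (hdelpos 1)
      intro x hx
      have hxI : x ∈ Ico (0:ℝ) 1 := ⟨le_trans hc.1 hx.1, lt_of_lt_of_le hx.2 (hdel1 1)⟩
      have := hsleq 1 x hx
      rw [hone x hxI] at this
      linarith
    have hsl1 : ∀ g : G, sl g = 1 := by
      intro g
      set φ : G →* Multiplicative ℝ :=
        { toFun := fun g => Multiplicative.ofAdd (Real.log (sl g)),
          map_one' := by
            show Multiplicative.ofAdd (Real.log (sl 1)) = 1
            rw [hone_sl, Real.log_one]; rfl,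
          map_mul' := by
            intro g h
            show Multiplicative.ofAdd (Real.log (sl (g * h))) = _
            rw [hmul_sl, Real.log_mul (hslpos g).ne' (hslpos h).ne']
            rfl } with hφ
      have h := hH1 φ g
      simp only [hφ, MonoidHom.coe_mk, OneHom.coe_mk] at h
      have hlog : Real.log (sl g) = 0 := by
        have : Multiplicative.toAdd (Multiplicative.ofAdd (Real.log (sl g))) =
            Multiplicative.toAdd (1 : Multiplicative ℝ) := by rw [h]
        simpa using this
      rcases Real.log_eq_zero.mp hlog with h' | h' | h'
      · exact absurd h' (hslpos g).ne'
      · exact h'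
      · nlinarith [hslpos g]
    intro g
    refine ⟨del g, hdelpos g, hdel1 g, fun x hx => ?_⟩
    rw [hsleq g x hx, hsl1 g]; ring
  -- The supremum of the interval fixed by the generators.
  set K : Set ℝ := {x : ℝ | x ≤ 1 ∧ ∀ s ∈ S, ∀ y : ℝ, 0 ≤ y → y < x → ρ s y = y} with hK
  have hK0 : (0:ℝ) ∈ K := ⟨zero_le_one, fun s _ y hy1 hy2 => absurd (hy1.trans_lt hy2) (lt_irrefl _)⟩
  have hKbdd : BddAbove K := ⟨1, fun x hx => hx.1⟩
  set c := sSup K with hcdef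
  have hc0 : 0 ≤ c := le_csSup hKbdd hK0
  have hc1 : c ≤ 1 := csSup_le ⟨0, hK0⟩ (fun x hx => hx.1)
  have hfixS : ∀ s ∈ S, ∀ y : ℝ, 0 ≤ y → y < c → ρ s y = y := by
    intro s hs y hy0 hyc
    obtain ⟨x, hxK, hyx⟩ := exists_lt_of_lt_csSup ⟨0, hK0⟩ hyc
    exact hxK.2 s hs y hy0 hyx
  have hfixAll : ∀ g : G, ∀ y : ℝ, 0 ≤ y → y < c → ρ g y = y := by
    intro g
    have hg : g ∈ Subgroup.closure S := hSgen ▸ Subgroup.mem_top g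
    refine Subgroup.closure_induction
      (p := fun g _ => ∀ y : ℝ, 0 ≤ y → y < c → ρ g y = y)
      (fun s hs => hfixS s hs) ?_ ?_ ?_ hg
    · exact fun y hy0 hyc => hone y ⟨hy0, hyc.trans_le hc1⟩
    · intro x z _ _ px pz y hy0 hyc
      rw [hmul x z y ⟨hy0, lt_of_lt_of_le hyc hc1⟩, pz y hy0 hyc, px y hy0 hyc]
    · intro x _ px y hy0 hyc
      have hyI : y ∈ Ico (0:ℝ) 1 := ⟨hy0, lt_of_lt_of_le hyc hc1⟩
      have h := hmul x⁻¹ x y hyI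
      rw [inv_mul_cancel, hone y hyI, px y hy0 hyc] at h
      exact h.symm
  have hceq : c = 1 := by
    by_contra hne
    have hclt : c < 1 := lt_of_le_of_ne hc1 hne
    have hcI : c ∈ Ico (0:ℝ) 1 := ⟨hc0, hclt⟩
    have hIcc : ∀ g : G, ∀ y ∈ Icc (0:ℝ) c, ρ g y = y := by
      intro g y hy
      rcases lt_or_eq_of_le hy.2 with h | h
      · exact hfixAll g y hy.1 h
      · rcases eq_or_lt_of_le hc0 with h0 | h0
        · rw [h, ← h0]; exact hfix g
        · rw [h]
          have hsub : Ico (0:ℝ) c ⊆ Ico (0:ℝ) 1 := Ico_subset_Ico_right hc1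
          have hcw : ContinuousWithinAt (ρ g) (Ico (0:ℝ) 1) c := (hPL g).2.1 c hcI
          have h1 : Filter.Tendsto (ρ g) (nhdsWithin c (Ico (0:ℝ) c)) (nhds (ρ g c)) :=
            hcw.tendsto.mono_left (nhdsWithin_mono c hsub)
          have h2 : Filter.Tendsto (ρ g) (nhdsWithin c (Ico (0:ℝ) c)) (nhds c) := by
            have hid : Filter.Tendsto (fun z : ℝ => z) (nhdsWithin c (Ico (0:ℝ) c)) (nhds c) :=
              Filter.Tendsto.mono_left Filter.tendsto_id nhdsWithin_le_nhds
            refine Filter.Tendsto.congr' ?_ hid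
            filter_upwards [self_mem_nhdsWithin] with z hz
            exact (hfixAll g z hz.1 hz.2).symm
          have : (nhdsWithin c (Ico (0:ℝ) c)).NeBot := by
            apply mem_closure_iff_nhdsWithin_neBot.mp
            rw [closure_Ico h0.ne]
            exact ⟨hc0, le_rfl⟩
          exact tendsto_nhds_unique h1 h2
    choose D hD1 hD2 hD3 using key c hcI hIcc
    by_cases hS : S = ∅
    · have h1K : (1:ℝ) ∈ K := ⟨le_rfl, by simp [hS]⟩
      have := le_csSup hKbdd h1K
      linarith
    · obtain ⟨s₀, hs₀⟩ := Set.nonempty_iff_ne_empty.mpr hS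
      have hTne : hSfin.toFinset.Nonempty := ⟨s₀, hSfin.mem_toFinset.mpr hs₀⟩
      set δ := hSfin.toFinset.inf' hTne D with hδdef
      have hδpos : 0 < δ := by
        rw [hδdef, Finset.lt_inf'_iff]
        exact fun s _ => hD1 s
      have hmemK : c + δ ∈ K := by
        constructor
        · have hle : δ ≤ D s₀ := Finset.inf'_le D (hSfin.mem_toFinset.mpr hs₀)
          have := hD2 s₀
          linarith
        · intro s hs y hy0 hyδ
          rcases lt_or_ge y c with h | h
          · exact hfixS s hs y hy0 h
          · have hle : δ ≤ D s := Finset.inf'_le D (hSfin.mem_toFinset.mpr hs)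
            exact hD3 s y ⟨h, by linarith⟩
      have := le_csSup hKbdd hmemK
      linarith
  intro g x hx
  exact hfixAll g x hx.1 (hceq ▸ hx.2)
end

section
/- Let G be a finitely generated group such that every group homomorphism from G to the additive group ℝ is trivial. Then any action of G on [0,1] by PL homeomorphisms fixing both endpoints 0 and 1 is trivial; that is, every element of G acts as the identity on all of [0,1]. -/
open Set

/-- `f` is piecewise linear on `[0,1]`: there are points `0 = t₀ < t₁ < ⋯ < tₙ = 1`
and reals `aᵢ, bᵢ` such that `f x = aᵢ * x + bᵢ` on each `[tᵢ, tᵢ₊₁]`. -/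
def IsPLOnIcc (f : ℝ → ℝ) : Prop :=
  ∃ (n : ℕ) (t a b : ℕ → ℝ),
    t 0 = 0 ∧ (∀ i < n, t i < t (i + 1)) ∧ t n = 1 ∧
    (∀ i < n, ∀ x ∈ Icc (t i) (t (i + 1)), f x = a i * x + b i)

/-- A PL homeomorphism of `[0,1]`: a homeomorphism of `[0,1]` (a bijection of `[0,1]`
onto itself, continuous with continuous inverse) which is piecewise linear. -/
def IsPLHomeoIcc (f : ℝ → ℝ) : Prop :=
  BijOn f (Icc (0:ℝ) 1) (Icc (0:ℝ) 1) ∧ ContinuousOn f (Icc (0:ℝ) 1) ∧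
  (∃ g : ℝ → ℝ, InvOn g f (Icc (0:ℝ) 1) (Icc (0:ℝ) 1) ∧ ContinuousOn g (Icc (0:ℝ) 1)) ∧
  IsPLOnIcc f

lemma PL.t_mono {n : ℕ} {t : ℕ → ℝ} (ht : ∀ i < n, t i < t (i + 1)) :
    ∀ j k, j ≤ k → k ≤ n → t j ≤ t k := by
  intro j k hjk hkn
  induction k with
  | zero => simp_all
  | succ m ih =>
    rcases Nat.lt_or_ge j (m+1) with h | h
    · have hjm : j ≤ m := Nat.lt_succ_iff.mp h
      exact le_trans (ih hjm (le_trans (Nat.le_succ m) hkn)) (le_of_lt (ht m (Nat.lt_of_succ_le hkn)))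
    · have : j = m + 1 := le_antisymm hjk h
      simp [this]

lemma PL.slope_unique {f : ℝ → ℝ} {s c c' δ δ' : ℝ} (hδ : 0 < δ) (hδ' : 0 < δ')
    (h : ∀ x ∈ Icc s (s + δ), f x = s + c * (x - s))
    (h' : ∀ x ∈ Icc s (s + δ'), f x = s + c' * (x - s)) : c = c' := by
  set m := min δ δ' with hm
  have hm0 : 0 < m := lt_min hδ hδ'
  have hx : s + m ∈ Icc s (s + δ) := ⟨by linarith, by have := min_le_left δ δ'; linarith⟩
  have hx' : s + m ∈ Icc s (s + δ') := ⟨by linarith, by have := min_le_right δ δ'; linarith⟩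
  have := (h _ hx).symm.trans (h' _ hx')
  have hcm : c * m = c' * m := by
    have : c * (s + m - s) = c' * (s + m - s) := by linarith
    simpa using this
  exact mul_right_cancel₀ (ne_of_gt hm0) hcm

lemma PL.exists_slope {f : ℝ → ℝ} (hf : IsPLHomeoIcc f) (hf1 : f 1 = 1) {s : ℝ}
    (hs0 : 0 ≤ s) (hs1 : s < 1) (hfs : f s = s) :
    ∃ c δ : ℝ, 0 < c ∧ 0 < δ ∧ s + δ ≤ 1 ∧ ∀ x ∈ Icc s (s + δ), f x = s + c * (x - s) := by
  obtain ⟨hbij, hcont, _, n, t, a, b, ht0, htlt, htn, hlin⟩ := hf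
  classical
  -- find the piece containing s
  set P : ℕ → Prop := fun i => t i ≤ s with hP
  have hP0 : P 0 := by simp [hP, ht0, hs0]
  set i := Nat.findGreatest P n with hi
  have hin : i ≤ n := Nat.findGreatest_le n
  have hPi : t i ≤ s := Nat.findGreatest_spec (Nat.zero_le n) hP0
  have hiltn : i < n := by
    rcases lt_or_eq_of_le hin with h | h
    · exact h
    · exfalso; rw [h] at hPi; rw [htn] at hPi; linarith
  have hstep : s < t (i + 1) := by
    by_contra hc
    push_neg at hc
    exact Nat.findGreatest_is_greatest (Nat.lt_succ_self i) hiltn hc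
  -- bounds
  have ht1le : t (i + 1) ≤ 1 := by
    have := PL.t_mono htlt (i+1) n hiltn (le_refl n); rwa [htn] at this
  have ht0le : (0:ℝ) ≤ t i := by
    have := PL.t_mono htlt 0 i (Nat.zero_le i) hin; rwa [ht0] at this
  set δ := t (i + 1) - s with hδdef
  have hδpos : 0 < δ := by simp [hδdef]; linarith
  have hsub : Icc s (s + δ) ⊆ Icc (t i) (t (i + 1)) := by
    intro x hx
    exact ⟨le_trans hPi hx.1, by have := hx.2; simp [hδdef] at this ⊢; linarith⟩
  have hbval : b i = s - a i * s := by
    have := hlin i hiltn s ⟨hPi, le_of_lt hstep⟩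
    rw [hfs] at this; linarith
  have hform : ∀ x ∈ Icc s (s + δ), f x = s + a i * (x - s) := by
    intro x hx
    have := hlin i hiltn x (hsub hx)
    rw [this, hbval]; ring
  refine ⟨a i, δ, ?_, hδpos, by simp [hδdef]; linarith, hform⟩
  -- positivity of slope
  by_contra hc
  push_neg at hc
  set x₀ := s + δ with hx₀
  have hx₀mem : x₀ ∈ Icc s (s + δ) := ⟨by linarith, le_refl _⟩
  have hx₀gt : s < x₀ := by simp [hx₀]; linarith
  have hx₀le1 : x₀ ≤ 1 := by simp [hx₀, hδdef]; linarith
  have hfx₀ : f x₀ = s + a i * (x₀ - s) := hform _ hx₀mem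
  have hmem01 : x₀ ∈ Icc (0:ℝ) 1 := ⟨by linarith, hx₀le1⟩
  have hsmem01 : s ∈ Icc (0:ℝ) 1 := ⟨hs0, le_of_lt hs1⟩
  rcases lt_or_eq_of_le hc with hlt | heq
  · -- a i < 0 : f x₀ < s, use IVT on [x₀, 1]
    have hfx₀lt : f x₀ < s := by
      have : a i * (x₀ - s) < 0 := mul_neg_of_neg_of_pos hlt (by linarith)
      linarith
    have hcont' : ContinuousOn f (Icc x₀ 1) :=
      hcont.mono (Icc_subset_Icc (by linarith) le_rfl)
    have hivt := intermediate_value_Icc hx₀le1 hcont'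
    have hsin : s ∈ Icc (f x₀) (f 1) := by rw [hf1]; exact ⟨le_of_lt hfx₀lt, le_of_lt hs1⟩
    obtain ⟨x₁, hx₁mem, hx₁val⟩ := hivt hsin
    have hx₁01 : x₁ ∈ Icc (0:ℝ) 1 := ⟨by have := hx₁mem.1; linarith, hx₁mem.2⟩
    have : x₁ = s := hbij.injOn hx₁01 hsmem01 (hx₁val.trans hfs.symm)
    have := hx₁mem.1
    linarith
  · -- a i = 0 : f x₀ = s = f s contradicts injectivity
    have : f x₀ = s := by rw [hfx₀, heq]; ring
    have : x₀ = s := hbij.injOn hmem01 hsmem01 (this.trans hfs.symm)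
    linarith

lemma PL.germ_trivial (G : Type*) [Group G] [Group.FG G]
    (hH1 : ∀ φ : G →* Multiplicative ℝ, ∀ g : G, φ g = 1)
    (ρ : G → ℝ → ℝ)
    (hPL : ∀ g : G, IsPLHomeoIcc (ρ g))
    (hfix1 : ∀ g : G, ρ g 1 = 1)
    (hone : ∀ x ∈ Icc (0:ℝ) 1, ρ 1 x = x)
    (hmul : ∀ g h : G, ∀ x ∈ Icc (0:ℝ) 1, ρ (g * h) x = ρ g (ρ h x))
    {s : ℝ} (hs0 : 0 ≤ s) (hs1 : s < 1) (hfixs : ∀ g, ρ g s = s) :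
    ∃ ε > 0, s + ε ≤ 1 ∧ ∀ g : G, ∀ x ∈ Icc s (s + ε), ρ g x = x := by
  classical
  choose c δ hc hδ hle hlin using
    fun g : G => PL.exists_slope (hPL g) (hfix1 g) hs0 hs1 (hfixs g)
  have hsub01 : ∀ g : G, Icc s (s + δ g) ⊆ Icc (0:ℝ) 1 := fun g x hx =>
    ⟨le_trans hs0 hx.1, le_trans hx.2 (hle g)⟩
  -- c 1 = 1
  have hc1 : c 1 = 1 := by
    have h1 : ∀ x ∈ Icc s (s + δ 1), ρ 1 x = s + 1 * (x - s) := by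
      intro x hx
      rw [hone x (hsub01 1 hx)]; ring
    exact PL.slope_unique (hδ 1) (hδ 1) (hlin 1) h1
  -- multiplicativity
  have hcmul : ∀ g h : G, c (g * h) = c g * c h := by
    intro g h
    set ε := min (δ (g * h)) (min (δ h) (δ g / c h)) with hε
    have hεpos : 0 < ε := lt_min (hδ _) (lt_min (hδ h) (div_pos (hδ g) (hc h)))
    have hε1 : ε ≤ δ (g * h) := min_le_left _ _
    have hε2 : ε ≤ δ h := le_trans (min_le_right _ _) (min_le_left _ _)
    have hε3 : ε ≤ δ g / c h := le_trans (min_le_right _ _) (min_le_right _ _)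
    have key : ∀ x ∈ Icc s (s + ε), c (g * h) * (x - s) = c g * c h * (x - s) := by
      intro x hx
      have hx1 : x ∈ Icc s (s + δ (g * h)) := ⟨hx.1, by have := hx.2; linarith⟩
      have hx2 : x ∈ Icc s (s + δ h) := ⟨hx.1, by have := hx.2; linarith⟩
      have hx01 : x ∈ Icc (0:ℝ) 1 := hsub01 _ hx1
      have hρh : ρ h x = s + c h * (x - s) := hlin h x hx2
      have hρhmem : ρ h x ∈ Icc s (s + δ g) := by
        constructor
        · rw [hρh]
          have : 0 ≤ c h * (x - s) := mul_nonneg (le_of_lt (hc h)) (by linarith [hx.1])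
          linarith
        · rw [hρh]
          have hxs : x - s ≤ ε := by have := hx.2; linarith
          have : c h * (x - s) ≤ c h * (δ g / c h) :=
            mul_le_mul_of_nonneg_left (le_trans hxs hε3) (le_of_lt (hc h))
          rw [mul_div_cancel₀ _ (ne_of_gt (hc h))] at this
          linarith
      have e1 : ρ (g * h) x = s + c (g * h) * (x - s) := hlin _ x hx1
      have e2 : ρ (g * h) x = s + c g * (c h * (x - s)) := by
        rw [hmul g h x hx01, hlin g _ hρhmem, hρh]; ring
      have := e1.symm.trans e2
      linarith [this]
    have := key (s + ε) ⟨by linarith, le_refl _⟩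
    simp only [add_sub_cancel_left] at this
    exact mul_right_cancel₀ (ne_of_gt hεpos) (by linarith [this])
  -- the homomorphism to ℝ kills everything
  have hcall1 : ∀ g : G, c g = 1 := by
    intro g
    set φ : G →* Multiplicative ℝ :=
      { toFun := fun g => Multiplicative.ofAdd (Real.log (c g))
        map_one' := by simp [hc1]
        map_mul' := by
          intro g h
          simp only [hcmul, Real.log_mul (ne_of_gt (hc g)) (ne_of_gt (hc h))]
          rfl } with hφ
    have := hH1 φ g
    have hlog : Real.log (c g) = 0 := by
      have h2 := congrArg Multiplicative.toAdd this
      simpa [hφ] using h2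
    rcases (Real.log_eq_zero).mp hlog with h | h | h
    · exact absurd h (ne_of_gt (hc g))
    · exact h
    · linarith [hc g]
  have hfixδ : ∀ g : G, ∀ x ∈ Icc s (s + δ g), ρ g x = x := by
    intro g x hx
    rw [hlin g x hx, hcall1 g]; ring
  -- finite generation: a common ε for all of G
  obtain ⟨S, hSgen, hSfin⟩ := Group.fg_iff.mp ‹Group.FG G›
  set T : Finset G := insert 1 hSfin.toFinset with hT
  have hTne : T.Nonempty := ⟨1, Finset.mem_insert_self 1 _⟩
  set ε := T.inf' hTne δ with hε
  have hεpos : 0 < ε := by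
    rw [hε, Finset.lt_inf'_iff]
    exact fun g _ => hδ g
  have hεle : ∀ g ∈ T, ε ≤ δ g := fun g hg => Finset.inf'_le δ hg
  have hεle1 : s + ε ≤ 1 := le_trans (by linarith [hεle 1 (Finset.mem_insert_self 1 _)]) (hle 1)
  have hsubε01 : Icc s (s + ε) ⊆ Icc (0:ℝ) 1 := fun x hx =>
    ⟨le_trans hs0 hx.1, le_trans hx.2 hεle1⟩
  set H : Subgroup G :=
    { carrier := {g : G | ∀ x ∈ Icc s (s + ε), ρ g x = x}
      one_mem' := fun x hx => hone x (hsubε01 hx)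
      mul_mem' := by
        intro g h hg hh x hx
        rw [hmul g h x (hsubε01 hx), hh x hx, hg x hx]
      inv_mem' := by
        intro g hg x hx
        have h1 : ρ g⁻¹ (ρ g x) = x := by
          rw [← hmul g⁻¹ g x (hsubε01 hx), inv_mul_cancel, hone x (hsubε01 hx)]
        rwa [hg x hx] at h1 } with hH
  have hST : S ⊆ ↑H := by
    intro g hg x hx
    have hgT : g ∈ T := Finset.mem_insert_of_mem (hSfin.mem_toFinset.mpr hg)
    exact hfixδ g x ⟨hx.1, le_trans hx.2 (by linarith [hεle g hgT])⟩
  have hHtop : H = ⊤ := top_le_iff.mp (hSgen ▸ Subgroup.closure_le H |>.mpr hST)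
  refine ⟨ε, hεpos, hεle1, fun g x hx => ?_⟩
  have hgH : g ∈ H := hHtop ▸ Subgroup.mem_top g
  exact hgH x hx

open Topology Filter

/-- PL Reeb–Thurston stability on the closed interval: if a finitely generated group
`G` with no nontrivial homomorphism to `ℝ` acts on `[0,1]` by PL homeomorphisms fixing
both endpoints `0` and `1`, then every element acts as the identity on `[0,1]`. -/
theorem pl_action_on_Icc_trivial (G : Type*) [Group G] [Group.FG G]
    (hH1 : ∀ φ : G →* Multiplicative ℝ, ∀ g : G, φ g = 1)
    (ρ : G → ℝ → ℝ)
    (hPL : ∀ g : G, IsPLHomeoIcc (ρ g))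
    (hfix0 : ∀ g : G, ρ g 0 = 0)
    (hfix1 : ∀ g : G, ρ g 1 = 1)
    (hone : ∀ x ∈ Icc (0:ℝ) 1, ρ 1 x = x)
    (hmul : ∀ g h : G, ∀ x ∈ Icc (0:ℝ) 1, ρ (g * h) x = ρ g (ρ h x)) :
    ∀ g : G, ∀ x ∈ Icc (0:ℝ) 1, ρ g x = x := by
  set A : Set ℝ := {y | y ∈ Icc (0:ℝ) 1 ∧ ∀ g : G, ∀ x ∈ Icc 0 y, ρ g x = x} with hA
  have h0A : (0:ℝ) ∈ A := by
    refine ⟨⟨le_refl _, zero_le_one⟩, fun g x hx => ?_⟩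
    have : x = 0 := le_antisymm hx.2 hx.1
    rw [this, hfix0]
  have hAne : A.Nonempty := ⟨0, h0A⟩
  have hAbdd : BddAbove A := ⟨1, fun y hy => hy.1.2⟩
  set σ := sSup A with hσ
  have hσ0 : 0 ≤ σ := le_csSup hAbdd h0A
  have hσ1 : σ ≤ 1 := csSup_le hAne (fun y hy => hy.1.2)
  -- everything fixes [0, σ]
  have hσfix : ∀ g : G, ∀ x ∈ Icc (0:ℝ) σ, ρ g x = x := by
    have hlt : ∀ g : G, ∀ x, 0 ≤ x → x < σ → ρ g x = x := by
      intro g x hx0 hxσ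
      obtain ⟨y, hyA, hxy⟩ := exists_lt_of_lt_csSup hAne hxσ
      exact hyA.2 g x ⟨hx0, le_of_lt hxy⟩
    intro g x hx
    rcases lt_or_eq_of_le hx.2 with h | h
    · exact hlt g x hx.1 h
    · -- x = σ : continuity argument
      subst h
      rcases eq_or_lt_of_le hσ0 with h0 | h0
    -- degenerate: σ = 0
      · rw [← h0, hfix0]
      · have hcont : ContinuousWithinAt (ρ g) (Ico 0 σ) σ :=
          ((hPL g).2.1 σ ⟨hσ0, hσ1⟩).mono (Icc_subset_Icc_right hσ1 |>.trans' Ico_subset_Icc_self)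
        have hne : (𝓝[Ico (0:ℝ) σ] σ).NeBot := by
          rw [← mem_closure_iff_nhdsWithin_neBot, closure_Ico (ne_of_lt h0)]
          exact ⟨hσ0, le_refl _⟩
        have h1 : Filter.Tendsto (ρ g) (𝓝[Ico (0:ℝ) σ] σ) (𝓝 (ρ g σ)) := hcont
        have h2 : Filter.Tendsto (ρ g) (𝓝[Ico (0:ℝ) σ] σ) (𝓝 σ) := by
          have hid : Filter.Tendsto (fun x : ℝ => x) (𝓝[Ico (0:ℝ) σ] σ) (𝓝 σ) :=
            tendsto_id.mono_left nhdsWithin_le_nhds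
          refine hid.congr' ?_
          filter_upwards [self_mem_nhdsWithin] with x hx
          exact (hlt g x hx.1 hx.2).symm
        exact tendsto_nhds_unique h1 h2
  rcases eq_or_lt_of_le hσ1 with hσeq | hσlt
  · intro g x hx
    exact hσfix g x (by rwa [hσeq])
  · exfalso
    obtain ⟨ε, hεpos, hεle1, hεfix⟩ :=
      PL.germ_trivial G hH1 ρ hPL hfix1 hone hmul hσ0 hσlt
        (fun g => hσfix g σ ⟨hσ0, le_refl _⟩)
    have hmemA : σ + ε ∈ A := by
      refine ⟨⟨by linarith, hεle1⟩, fun g x hx => ?_⟩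
      rcases le_or_gt x σ with h | h
      · exact hσfix g x ⟨hx.1, h⟩
      · exact hεfix g x ⟨le_of_lt h, hx.2⟩
    have := le_csSup hAbdd hmemA
    linarith
end

section
/- Let G be a finitely generated group such that every group homomorphism from G to the additive group ℝ is trivial. Suppose G acts on ℝ by PL homeomorphisms such that every element of G fixes 0 and maps the positive half-line (0,∞) onto itself (i.e., the action is orientation-preserving). Then the action is trivial: every element of G acts as the identity on ℝ. (This is the one-dimensional case of the PL Reeb–Thurston stability theorem: fixing 0 and preserving the two rays at 0 means G acts trivially on the tangent sphere at the fixed point.) -/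
open Set

/-- `f : ℝ → ℝ` is piecewise linear: there are points `t₀ < t₁ < ⋯ < tₙ` such that
`f` is affine on `(-∞, t₀]`, on each `[tᵢ, tᵢ₊₁]`, and on `[tₙ, ∞)`. -/
def IsPLReal (f : ℝ → ℝ) : Prop :=
  ∃ (n : ℕ) (t a b : ℕ → ℝ),
    (∀ i < n, t i < t (i + 1)) ∧
    (∀ x ≤ t 0, f x = a 0 * x + b 0) ∧
    (∀ i < n, ∀ x ∈ Icc (t i) (t (i + 1)), f x = a (i + 1) * x + b (i + 1)) ∧
    (∀ x, t n ≤ x → f x = a (n + 1) * x + b (n + 1))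

/-- A PL homeomorphism of `ℝ`: a homeomorphism of `ℝ` which is piecewise linear. -/
def IsPLHomeoReal (f : ℝ → ℝ) : Prop :=
  Function.Bijective f ∧ Continuous f ∧
  (∃ g : ℝ → ℝ, Function.LeftInverse g f ∧ Function.RightInverse g f ∧ Continuous g) ∧
  IsPLReal f

lemma isPLReal_negConj {f : ℝ → ℝ} (hf : IsPLReal f) :
    IsPLReal (fun x => -f (-x)) := by
  obtain ⟨n, t, a, b, ht, h0, hmid, hlast⟩ := hf
  refine ⟨n, fun i => -t (n - i), fun i => a (n + 1 - i), fun i => -b (n + 1 - i),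
    ?_, ?_, ?_, ?_⟩
  · intro i hi
    have h1 : n - (i+1) < n := by omega
    have h2 : n - i = (n - (i+1)) + 1 := by omega
    have := ht (n - (i+1)) h1
    show -t (n - i) < -t (n - (i+1))
    rw [h2]
    exact neg_lt_neg this
  · intro x hx
    simp only [Nat.sub_zero] at hx
    have hx' : t n ≤ -x := by linarith [neg_le_neg hx]
    have := hlast (-x) hx'
    show -f (-x) = a (n + 1 - 0) * x + -b (n + 1 - 0)
    rw [Nat.sub_zero, this]
    ring
  · intro i hi x hx
    simp only [mem_Icc] at hx
    have hj : n - (i+1) < n := by omega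
    have hji : n - (i+1) + 1 = n - i := by omega
    have hx1 : t (n - (i+1)) ≤ -x := by
      have := hx.2
      rw [hji] at *
      linarith
    have hx2 : -x ≤ t (n - (i+1) + 1) := by
      rw [hji]; linarith [hx.1]
    have := hmid (n - (i+1)) hj (-x) ⟨hx1, hx2⟩
    have hidx : n + 1 - (i + 1) = n - (i+1) + 1 := by omega
    show -f (-x) = a (n + 1 - (i + 1)) * x + -b (n + 1 - (i + 1))
    rw [hidx, this]
    ring
  · intro x hx
    simp only at hx
    have hx' : -x ≤ t 0 := by
      have : n - n = 0 := Nat.sub_self n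
      rw [this] at hx
      linarith
    have := h0 (-x) hx'
    have hidx : n + 1 - (n + 1) = 0 := by omega
    show -f (-x) = a (n + 1 - (n + 1)) * x + -b (n + 1 - (n + 1))
    rw [hidx, this]
    ring

lemma affine_right {f : ℝ → ℝ} (hmono : StrictMono f) (hPL : IsPLReal f)
    {c : ℝ} (hfc : f c = c) :
    ∃ s : ℝ, 0 < s ∧ ∃ ε : ℝ, 0 < ε ∧ ∀ x ∈ Icc c (c + ε), f x = c + s * (x - c) := by
  classical
  obtain ⟨n, t, a, b, ht, h0, hmid, hlast⟩ := hPL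
  have key : ∃ A B ε : ℝ, 0 < ε ∧ ∀ x ∈ Icc c (c + ε), f x = A * x + B := by
    rcases lt_or_ge c (t 0) with h | h
    · exact ⟨a 0, b 0, t 0 - c, by linarith,
        fun x hx => h0 x (by have := hx.2; linarith)⟩
    rcases le_or_gt (t n) c with h' | h'
    · exact ⟨a (n+1), b (n+1), 1, one_pos,
        fun x hx => hlast x (by have := hx.1; linarith)⟩
    · have hi1 : t (Nat.findGreatest (fun j => t j ≤ c) n) ≤ c :=
        Nat.findGreatest_spec (P := fun j => t j ≤ c) (Nat.zero_le n) h
      have hin : Nat.findGreatest (fun j => t j ≤ c) n ≤ n := Nat.findGreatest_le n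
      obtain ⟨i, hidef⟩ : ∃ i, Nat.findGreatest (fun j => t j ≤ c) n = i := ⟨_, rfl⟩
      rw [hidef] at hi1 hin
      have hilt : i < n := lt_of_le_of_ne hin (by
        rintro rfl
        exact absurd hi1 (not_le.mpr h'))
      have hi2 : c < t (i+1) := by
        have := Nat.findGreatest_is_greatest (P := fun j => t j ≤ c) (n := n) (k := i + 1)
          (by omega) (by omega)
        exact not_le.mp this
      exact ⟨a (i+1), b (i+1), t (i+1) - c, by linarith,
        fun x hx => hmid i hilt x ⟨by have := hx.1; linarith, by have := hx.2; linarith⟩⟩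
  obtain ⟨A, B, ε, hε, hf⟩ := key
  have hcc : c = A * c + B := by
    have := hf c ⟨le_refl c, by linarith⟩
    rw [hfc] at this
    exact this
  have hformula : ∀ x ∈ Icc c (c+ε), f x = c + A * (x - c) := by
    intro x hx
    rw [hf x hx]
    linear_combination -hcc
  have hA : 0 < A := by
    have h1 := hformula (c+ε) ⟨by linarith, le_refl _⟩
    have h2 := hmono (show c < c + ε by linarith)
    rw [hfc, h1] at h2
    nlinarith
  exact ⟨A, hA, ε, hε, hformula⟩

lemma locally_id {G : Type*} [Group G]
    (hH1 : ∀ φ : G →* Multiplicative ℝ, ∀ g : G, φ g = 1)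
    (ρ : G → ℝ → ℝ)
    (hmono : ∀ g : G, StrictMono (ρ g))
    (hPL : ∀ g : G, IsPLReal (ρ g))
    (hone : ∀ x : ℝ, ρ 1 x = x)
    (hmul : ∀ g h : G, ∀ x : ℝ, ρ (g * h) x = ρ g (ρ h x))
    {c : ℝ} (hc : ∀ g : G, ρ g c = c) :
    ∀ g : G, ∃ ε : ℝ, 0 < ε ∧ ∀ x ∈ Icc c (c + ε), ρ g x = x := by
  classical
  set Sl : G → ℝ → Prop := fun g r =>
    0 < r ∧ ∃ ε : ℝ, 0 < ε ∧ ∀ x ∈ Icc c (c + ε), ρ g x = c + r * (x - c) with hSldef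
  have hex : ∀ g : G, ∃ r, Sl g r := by
    intro g
    obtain ⟨s, hs, ε, hε, h⟩ := affine_right (hmono g) (hPL g) (hc g)
    exact ⟨s, hs, ε, hε, h⟩
  have huniq : ∀ g r r', Sl g r → Sl g r' → r = r' := by
    rintro g r r' ⟨hr, ε, hε, h⟩ ⟨hr', ε', hε', h'⟩
    have hm : (0:ℝ) < min ε ε' := lt_min hε hε'
    have e1 := h (c + min ε ε') ⟨by linarith, by
      have := min_le_left ε ε'; linarith⟩
    have e2 := h' (c + min ε ε') ⟨by linarith, by
      have := min_le_right ε ε'; linarith⟩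
    have : r * min ε ε' = r' * min ε ε' := by
      have : r * (c + min ε ε' - c) = r' * (c + min ε ε' - c) := by linarith
      simpa using this
    exact mul_right_cancel₀ (ne_of_gt hm) this
  have hSl1 : Sl (1:G) 1 := ⟨one_pos, 1, one_pos, fun x hx => by rw [hone]; ring⟩
  have hSlmul : ∀ g h : G, ∀ r r', Sl g r → Sl h r' → Sl (g*h) (r*r') := by
    rintro g h r r' ⟨hr, ε, hε, hg⟩ ⟨hr', ε', hε', hh⟩
    refine ⟨mul_pos hr hr', min ε' (ε / r'), lt_min hε' (div_pos hε hr'), ?_⟩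
    rintro x ⟨hx1, hx2⟩
    have hxε' : x ≤ c + ε' := by
      have := min_le_left ε' (ε / r'); linarith
    have h1 : ρ h x = c + r' * (x - c) := hh x ⟨hx1, hxε'⟩
    have hmem : ρ h x ∈ Icc c (c + ε) := by
      constructor
      · rw [h1]; nlinarith [sub_nonneg.mpr hx1]
      · rw [h1]
        have hle : x - c ≤ ε / r' := by
          have := min_le_right ε' (ε / r'); linarith
        have h2 : r' * (x - c) ≤ r' * (ε / r') := mul_le_mul_of_nonneg_left hle hr'.le
        rw [mul_div_cancel₀ ε (ne_of_gt hr')] at h2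
        linarith
    have h3 := hg (ρ h x) hmem
    rw [hmul g h x, h3, h1]
    ring
  choose s hs using hex
  set φ : G →* Multiplicative ℝ :=
    { toFun := fun g => Multiplicative.ofAdd (Real.log (s g)),
      map_one' := by
        have h1 : s 1 = 1 := huniq 1 _ _ (hs 1) hSl1
        simp [h1]
      map_mul' := fun g h => by
        have h1 : s (g*h) = s g * s h :=
          huniq (g*h) _ _ (hs _) (hSlmul g h _ _ (hs g) (hs h))
        simp only [h1, Real.log_mul (ne_of_gt (hs g).1) (ne_of_gt (hs h).1)]
        rfl } with hφdef
  intro g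
  have hlog : Real.log (s g) = 0 := by
    have h := hH1 φ g
    exact congrArg Multiplicative.toAdd h
  have hs1 : s g = 1 := by
    have h2 := Real.exp_log (hs g).1
    rw [hlog, Real.exp_zero] at h2
    exact h2.symm
  obtain ⟨hpos, ε, hε, hform⟩ := hs g
  exact ⟨ε, hε, fun x hx => by rw [hform x hx, hs1]; ring⟩

lemma right_half {G : Type*} [Group G] [Group.FG G]
    (hH1 : ∀ φ : G →* Multiplicative ℝ, ∀ g : G, φ g = 1)
    (ρ : G → ℝ → ℝ)
    (hmono : ∀ g : G, StrictMono (ρ g))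
    (hcont : ∀ g : G, Continuous (ρ g))
    (hPL : ∀ g : G, IsPLReal (ρ g))
    (hfix : ∀ g : G, ρ g 0 = 0)
    (hone : ∀ x : ℝ, ρ 1 x = x)
    (hmul : ∀ g h : G, ∀ x : ℝ, ρ (g * h) x = ρ g (ρ h x)) :
    ∀ g : G, ∀ x : ℝ, 0 ≤ x → ρ g x = x := by
  classical
  by_contra hcon
  push_neg at hcon
  obtain ⟨g₀, x₀, hx₀, hne⟩ := hcon
  set T := {x : ℝ | 0 ≤ x ∧ ∀ g : G, ∀ y ∈ Icc (0:ℝ) x, ρ g y = y} with hT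
  have h0T : (0:ℝ) ∈ T := ⟨le_refl 0, fun g y hy => by
    have : y = 0 := le_antisymm hy.2 hy.1
    rw [this, hfix]⟩
  have hbdd : BddAbove T := by
    refine ⟨x₀, fun x hx => ?_⟩
    by_contra hlt
    push_neg at hlt
    exact hne (hx.2 g₀ x₀ ⟨hx₀, hlt.le⟩)
  set c := sSup T with hcdef
  have hc0 : 0 ≤ c := le_csSup hbdd h0T
  have hfixc : ∀ g : G, ρ g c = c := by
    intro g
    rcases eq_or_lt_of_le hc0 with h | h
    · rw [← h, hfix]
    · have hint : EqOn (ρ g) id (Ico (0:ℝ) c) := by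
        intro y hy
        obtain ⟨x, hxT, hyx⟩ := exists_lt_of_lt_csSup ⟨0, h0T⟩ hy.2
        exact hxT.2 g y ⟨hy.1, hyx.le⟩
      have hcl := hint.closure (hcont g) continuous_id
      rw [closure_Ico (ne_of_lt h)] at hcl
      exact hcl ⟨hc0, le_refl c⟩
  have hcT : ∀ g : G, ∀ y ∈ Icc (0:ℝ) c, ρ g y = y := by
    intro g y hy
    rcases lt_or_eq_of_le hy.2 with h | h
    · obtain ⟨x, hxT, hyx⟩ := exists_lt_of_lt_csSup ⟨0, h0T⟩ h
      exact hxT.2 g y ⟨hy.1, hyx.le⟩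
    · rw [h]; exact hfixc g
  have hloc := locally_id hH1 ρ hmono hPL hone hmul hfixc
  choose εf hεf hεf' using hloc
  obtain ⟨S, hS⟩ : ∃ S : Finset G, Subgroup.closure (S : Set G) = ⊤ :=
    Group.FG.out
  set S' : Finset G := insert 1 S with hS'def
  have hS'ne : S'.Nonempty := Finset.insert_nonempty _ _
  set ε := S'.inf' hS'ne εf with hεdef
  have hεpos : 0 < ε := by
    rw [hεdef, Finset.lt_inf'_iff]
    exact fun g _ => hεf g
  have hεle : ∀ g ∈ S, ε ≤ εf g := by
    intro g hg
    exact Finset.inf'_le εf (Finset.mem_insert_of_mem hg)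
  set H : Subgroup G :=
    { carrier := {g : G | ∀ y ∈ Icc (0:ℝ) (c + ε), ρ g y = y},
      one_mem' := fun y _ => hone y,
      mul_mem' := by
        intro g h hg hh y hy
        rw [hmul g h y, hh y hy]
        exact hg y hy
      inv_mem' := by
        intro g hg y hy
        have h1 : ρ (g⁻¹ * g) y = ρ g⁻¹ (ρ g y) := hmul _ _ y
        rw [hg y hy] at h1
        rw [inv_mul_cancel] at h1
        rw [← h1, hone] } with hHdef
  have hSH : (S : Set G) ⊆ (H : Set G) := by
    intro g hgS y hy
    rcases le_or_gt y c with h | h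
    · exact hcT g y ⟨hy.1, h⟩
    · refine hεf' g y ⟨h.le, ?_⟩
      have := hεle g hgS
      have := hy.2
      linarith
  have hHtop : ∀ g : G, g ∈ H := by
    have h1 : Subgroup.closure (S : Set G) ≤ H := (Subgroup.closure_le H).mpr hSH
    rw [hS] at h1
    exact fun g => h1 (Subgroup.mem_top g)
  have hcεT : c + ε ∈ T := ⟨by linarith, fun g y hy => hHtop g y hy⟩
  have : c + ε ≤ c := le_csSup hbdd hcεT
  linarith

/-- One-dimensional PL Reeb–Thurston stability: if a finitely generated group `G` with
no nontrivial homomorphism to `ℝ` acts on `ℝ` by PL homeomorphisms, each fixing `0` and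
mapping the positive half-line `(0, ∞)` onto itself, then the action is trivial. -/
theorem pl_action_on_real_trivial (G : Type*) [Group G] [Group.FG G]
    (hH1 : ∀ φ : G →* Multiplicative ℝ, ∀ g : G, φ g = 1)
    (ρ : G → ℝ → ℝ)
    (hPL : ∀ g : G, IsPLHomeoReal (ρ g))
    (hfix : ∀ g : G, ρ g 0 = 0)
    (hpos : ∀ g : G, ρ g '' Ioi (0:ℝ) = Ioi (0:ℝ))
    (hone : ∀ x : ℝ, ρ 1 x = x)
    (hmul : ∀ g h : G, ∀ x : ℝ, ρ (g * h) x = ρ g (ρ h x)) :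
    ∀ g : G, ∀ x : ℝ, ρ g x = x := by
  have hcont : ∀ g : G, Continuous (ρ g) := fun g => (hPL g).2.1
  have hmono : ∀ g : G, StrictMono (ρ g) := by
    intro g
    rcases (hcont g).strictMono_of_inj (hPL g).1.1 with h | h
    · exact h
    · exfalso
      have h1 : ρ g 1 ∈ Ioi (0:ℝ) := by
        rw [← hpos g]
        exact ⟨1, mem_Ioi.mpr one_pos, rfl⟩
      have h2 : ρ g 1 < ρ g 0 := h one_pos
      rw [hfix g] at h2
      exact absurd h1 (by simp [mem_Ioi]; linarith)
  have hright := right_half hH1 ρ hmono hcont (fun g => (hPL g).2.2.2) hfix hone hmul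
  -- mirrored action
  set ρ' : G → ℝ → ℝ := fun g x => -(ρ g (-x)) with hρ'def
  have hmono' : ∀ g : G, StrictMono (ρ' g) := by
    intro g x y hxy
    simp only [hρ'def]
    exact neg_lt_neg (hmono g (neg_lt_neg hxy))
  have hcont' : ∀ g : G, Continuous (ρ' g) :=
    fun g => ((hcont g).comp continuous_neg).neg
  have hPL' : ∀ g : G, IsPLReal (ρ' g) :=
    fun g => isPLReal_negConj (hPL g).2.2.2
  have hfix' : ∀ g : G, ρ' g 0 = 0 := by
    intro g
    simp [hρ'def, hfix g]
  have hone' : ∀ x : ℝ, ρ' 1 x = x := by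
    intro x
    simp [hρ'def, hone]
  have hmul' : ∀ g h : G, ∀ x : ℝ, ρ' (g * h) x = ρ' g (ρ' h x) := by
    intro g h x
    simp [hρ'def, hmul g h (-x)]
  have hleft := right_half hH1 ρ' hmono' hcont' hPL' hfix' hone' hmul'
  intro g x
  rcases le_or_gt 0 x with h | h
  · exact hright g x h
  · have h1 := hleft g (-x) (by linarith)
    simp only [hρ'def, neg_neg] at h1
    linarith
end

section
/- Let G be a finitely generated group such that every group homomorphism from G to the additive group ℝ is trivial. Suppose G acts on ℝ by orientation-preserving PL homeomorphisms, each of which commutes with the translation x ↦ x + 1 and fixes 0. Then every element of G acts as the identity on ℝ. (This expresses triviality of a PL action on the circle ℝ/ℤ with a global fixed point, for a group with H₁(G;ℝ) = 0, via lifts to ℝ.) -/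
open Set

lemma aux_right_affine (f : ℝ → ℝ) (hf : IsPLReal f) (u : ℝ) :
    ∃ a b : ℝ, ∃ δ : ℝ, 0 < δ ∧ ∀ y ∈ Icc u (u + δ), f y = a * y + b := by
  classical
  obtain ⟨n, t, a, b, hmono, h0, hmid, hend⟩ := hf
  by_cases h1 : u < t 0
  · exact ⟨a 0, b 0, t 0 - u, by linarith,
      fun y hy => h0 y (by have := hy.2; linarith)⟩
  by_cases h2 : t n ≤ u
  · exact ⟨a (n + 1), b (n + 1), 1, one_pos, fun y hy => hend y (le_trans h2 hy.1)⟩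
  push_neg at h1 h2
  set i := Nat.findGreatest (fun j => t j ≤ u) n with hi
  have hile : i ≤ n := Nat.findGreatest_le n
  have hti : t i ≤ u := Nat.findGreatest_spec (P := fun j => t j ≤ u) (Nat.zero_le n) h1
  have hin : i < n := by
    rcases lt_or_eq_of_le hile with h | h
    · exact h
    · exfalso; rw [h] at hti; linarith
  have hlt : u < t (i + 1) := by
    by_contra hc; push_neg at hc
    exact Nat.findGreatest_is_greatest (Nat.lt_succ_self i) (by omega) hc
  refine ⟨a (i + 1), b (i + 1), t (i + 1) - u, by linarith, fun y hy => ?_⟩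
  exact hmid i hin y ⟨le_trans hti hy.1, by have := hy.2; linarith⟩

lemma aux_right_slope (f : ℝ → ℝ) (hf : IsPLReal f) (hm : StrictMono f) (u : ℝ)
    (hu : f u = u) :
    ∃ c : ℝ, 0 < c ∧ ∃ δ : ℝ, 0 < δ ∧ ∀ y ∈ Icc u (u + δ), f y = u + c * (y - u) := by
  obtain ⟨a, b, δ, hδ, hspec⟩ := aux_right_affine f hf u
  have hu' : a * u + b = u := by
    rw [← hspec u ⟨le_refl u, by linarith⟩, hu]
  have key : ∀ y ∈ Icc u (u + δ), f y = u + a * (y - u) := by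
    intro y hy
    rw [hspec y hy]
    linear_combination hu'
  have ha : 0 < a := by
    have h1 : f u < f (u + δ) := hm (by linarith)
    have h2 : f (u + δ) = u + a * δ := by
      rw [key (u + δ) ⟨by linarith, le_refl _⟩]; ring_nf
    rw [hu, h2] at h1
    nlinarith
  exact ⟨a, ha, δ, hδ, key⟩

/-- Triviality of a PL circle action with a global fixed point, via lifts: if a finitely
generated group `G` with no nontrivial homomorphism to `ℝ` acts on `ℝ` by
orientation-preserving (strictly increasing) PL homeomorphisms, each commuting with the
translation `x ↦ x + 1` and fixing `0`, then every element acts as the identity. -/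
theorem pl_circle_action_with_fixed_point_trivial (G : Type*) [Group G] [Group.FG G]
    (hH1 : ∀ φ : G →* Multiplicative ℝ, ∀ g : G, φ g = 1)
    (ρ : G → ℝ → ℝ)
    (hPL : ∀ g : G, IsPLHomeoReal (ρ g))
    (hmono : ∀ g : G, StrictMono (ρ g))
    (hcomm : ∀ g : G, ∀ x : ℝ, ρ g (x + 1) = ρ g x + 1)
    (hfix : ∀ g : G, ρ g 0 = 0)
    (hone : ∀ x : ℝ, ρ 1 x = x)
    (hmul : ∀ g h : G, ∀ x : ℝ, ρ (g * h) x = ρ g (ρ h x)) :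
    ∀ g : G, ∀ x : ℝ, ρ g x = x := by
  by_contra hcon
  push_neg at hcon
  obtain ⟨g0, x, hg0x⟩ := hcon
  classical
  -- integers are fixed
  have hint : ∀ g : G, ∀ m : ℤ, ρ g (m : ℝ) = m := by
    intro g m
    induction m using Int.induction_on with
    | zero => simpa using hfix g
    | succ k ih =>
        push_cast at ih ⊢
        rw [hcomm g, ih]
    | pred k ih =>
        have h := hcomm g ((-(k : ℝ) - 1))
        push_cast
        push_cast at ih
        have : (-(k:ℝ) - 1) + 1 = -(k:ℝ) := by ring
        rw [this] at h
        linarith [h, ih]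
  -- the set of common fixed points below x
  set S : Set ℝ := {y | y ≤ x ∧ ∀ g : G, ρ g y = y} with hS
  have hSne : S.Nonempty := ⟨(⌊x⌋ : ℝ), Int.floor_le x, fun g => hint g ⌊x⌋⟩
  have hSbdd : BddAbove S := ⟨x, fun y hy => hy.1⟩
  have hSclosed : IsClosed S := by
    have : S = Iic x ∩ ⋂ g : G, {y : ℝ | ρ g y = y} := by
      ext y
      simp [hS, Set.mem_iInter, Set.mem_setOf_eq]
    rw [this]
    exact isClosed_Iic.inter (isClosed_iInter fun g =>
      isClosed_eq (hPL g).2.1 continuous_id)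
  set u : ℝ := sSup S with hu
  have huS : u ∈ S := hSclosed.csSup_mem hSne hSbdd
  have hufix : ∀ g : G, ρ g u = u := huS.2
  have hux : u < x := lt_of_le_of_ne huS.1 (fun h => hg0x (h ▸ hufix g0))
  -- right slope at u
  have hsl : ∀ g : G, ∃ c : ℝ, 0 < c ∧ ∃ δ : ℝ, 0 < δ ∧
      ∀ y ∈ Icc u (u + δ), ρ g y = u + c * (y - u) :=
    fun g => aux_right_slope (ρ g) (hPL g).2.2.2 (hmono g) u (hufix g)
  choose c hc δ hδ hspec using hsl
  -- uniqueness of the slope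
  have huniq : ∀ (g : G) (c' δ' : ℝ), 0 < δ' →
      (∀ y ∈ Icc u (u + δ'), ρ g y = u + c' * (y - u)) → c g = c' := by
    intro g c' δ' hδ' hspec'
    set m := min (δ g) δ' with hm
    have hmpos : 0 < m := lt_min (hδ g) hδ'
    have h1 : ρ g (u + m) = u + c g * m := by
      have := hspec g (u + m) ⟨by linarith, by have := min_le_left (δ g) δ'; linarith⟩
      simpa using this
    have h2 : ρ g (u + m) = u + c' * m := by
      have := hspec' (u + m) ⟨by linarith, by have := min_le_right (δ g) δ'; linarith⟩
      simpa using this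
    have : c g * m = c' * m := by linarith [h1, h2]
    exact mul_right_cancel₀ (ne_of_gt hmpos) this
  -- multiplicativity of the slope
  have hmul_sl : ∀ g h : G, c (g * h) = c g * c h := by
    intro g h
    apply huniq (g * h) (c g * c h) (min (δ h) (δ g / c h))
    · exact lt_min (hδ h) (div_pos (hδ g) (hc h))
    · intro y hy
      have hy1 : u ≤ y := hy.1
      have hy2 : y ≤ u + min (δ h) (δ g / c h) := hy.2
      have hyh : y ∈ Icc u (u + δ h) :=
        ⟨hy1, by have := min_le_left (δ h) (δ g / c h); linarith⟩
      have hval : ρ h y = u + c h * (y - u) := hspec h y hyh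
      have hmem : ρ h y ∈ Icc u (u + δ g) := by
        constructor
        · rw [hval]; nlinarith [hc h]
        · rw [hval]
          have h3 : y - u ≤ δ g / c h := by
            have := min_le_right (δ h) (δ g / c h); linarith
          have h4 : c h * (y - u) ≤ c h * (δ g / c h) :=
            mul_le_mul_of_nonneg_left h3 (le_of_lt (hc h))
          have h5 : c h * (δ g / c h) = δ g := by
            rw [mul_comm, div_mul_cancel₀ _ (ne_of_gt (hc h))]
          linarith
      rw [hmul g h y, hspec g _ hmem, hval]
      ring
  -- the homomorphism to ℝ
  set φ : G →* Multiplicative ℝ :=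
    MonoidHom.mk' (fun g => Multiplicative.ofAdd (Real.log (c g))) (by
      intro g h
      rw [hmul_sl g h, Real.log_mul (ne_of_gt (hc g)) (ne_of_gt (hc h)), ofAdd_add])
    with hφ
  have hc1 : ∀ g : G, c g = 1 := by
    intro g
    have h := hH1 φ g
    have hlog : Real.log (c g) = 0 := by
      have : Multiplicative.ofAdd (Real.log (c g)) = 1 := h
      simpa using this
    have := Real.exp_log (hc g)
    rw [hlog, Real.exp_zero] at this
    exact this.symm
  have hid : ∀ g : G, ∀ y ∈ Icc u (u + δ g), ρ g y = y := by
    intro g y hy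
    rw [hspec g y hy, hc1 g]; ring
  -- finite generation
  obtain ⟨T, hT⟩ := Group.fg_def.mp ‹Group.FG G›
  set T' : Finset G := insert 1 T with hT'
  have hT'ne : T'.Nonempty := ⟨1, Finset.mem_insert_self 1 T⟩
  set ε : ℝ := T'.inf' hT'ne δ with hε
  have hεpos : 0 < ε := by
    rw [hε, Finset.lt_inf'_iff]
    intro b _
    exact hδ b
  set H : Subgroup G :=
    { carrier := {g : G | ∀ y ∈ Icc u (u + ε), ρ g y = y}
      one_mem' := fun y _ => hone y
      mul_mem' := by
        intro a b ha hb y hy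
        rw [hmul a b y, hb y hy, ha y hy]
      inv_mem' := by
        intro a ha y hy
        have : ρ a⁻¹ (ρ a y) = y := by
          rw [← hmul a⁻¹ a y]
          simpa using hone y
        rw [ha y hy] at this
        exact this } with hH
  have hTH : (T : Set G) ⊆ (H : Set G) := by
    intro g hg
    intro y hy
    have hεδ : ε ≤ δ g := Finset.inf'_le δ (Finset.mem_insert_of_mem hg)
    exact hid g y ⟨hy.1, by have := hy.2; linarith⟩
  have hall : ∀ g : G, g ∈ H := by
    intro g
    have : (⊤ : Subgroup G) ≤ H := by
      rw [← hT]
      exact (Subgroup.closure_le H).mpr hTH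
    exact this (Subgroup.mem_top g)
  -- the contradiction point
  set p : ℝ := u + min ε (x - u) / 2 with hp
  have hminpos : 0 < min ε (x - u) := lt_min hεpos (by linarith)
  have hpS : p ∈ S := by
    constructor
    · have := min_le_right ε (x - u); rw [hp]; linarith
    · intro g
      exact hall g p ⟨by rw [hp]; linarith, by
        have := min_le_left ε (x - u); rw [hp]; linarith⟩
  have : p ≤ u := le_csSup hSbdd hpS
  rw [hp] at this
  linarith
end
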